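/- Gusfield's sheltering lemma: Let X be a minimum x-y-cut side with x ∈ X, y ∉ X, and let H be a minimum u-v-cut side with u, v ∉ X and x ∈ H. Then H ∪ X is also a side of a minimum u-v-cut, i.e., cost(H ∪ X) ≤ cost(H) and H ∪ X still separates u and v. -/

import Mathlib

open Finset

variable {V : Type*}

/-- Cost of the cut given by side `S`: sum of costs of ordered pairs crossing the cut. -/
def cutCost [Fintype V] [DecidableEq V] (c : V → V → NNReal) (S : Finset V) : NNReal :=
  ∑ x ∈ S, ∑ y ∈ Sᶜ, c x y

/-- Minimum `u`-`v`-cut value. -/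
noncomputable def minCut [Fintype V] [DecidableEq V] (c : V → V → NNReal) (u v : V) : NNReal :=
  sInf {w : NNReal | ∃ S : Finset V, u ∈ S ∧ v ∉ S ∧ cutCost c S = w}

lemma sum_eq_sum_ite [Fintype V] [DecidableEq V] (f : V → NNReal) (T : Finset V) :
    ∑ a ∈ T, f a = ∑ a : V, if a ∈ T then f a else 0 := by
  rw [Finset.sum_ite_mem, Finset.univ_inter]

lemma cutCost_eq [Fintype V] [DecidableEq V] (c : V → V → NNReal) (S : Finset V) :
    cutCost c S = ∑ a : V, ∑ b : V, if a ∈ S ∧ b ∉ S then c a b else 0 := by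
  unfold cutCost
  rw [sum_eq_sum_ite (fun a => ∑ y ∈ Sᶜ, c a y) S]
  apply Finset.sum_congr rfl
  intro a _
  by_cases ha : a ∈ S
  · simp only [ha, if_true, true_and]
    rw [sum_eq_sum_ite (c a) Sᶜ]
    apply Finset.sum_congr rfl
    intro b _
    simp [Finset.mem_compl]
  · simp [ha]

lemma cutCost_submodular [Fintype V] [DecidableEq V] (c : V → V → NNReal) (S T : Finset V) :
    cutCost c (S ∪ T) + cutCost c (S ∩ T) ≤ cutCost c S + cutCost c T := by
  simp only [cutCost_eq, ← Finset.sum_add_distrib]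
  apply Finset.sum_le_sum; intro a _
  apply Finset.sum_le_sum; intro b _
  by_cases haS : a ∈ S <;> by_cases haT : a ∈ T <;>
    by_cases hbS : b ∈ S <;> by_cases hbT : b ∈ T <;>
    simp [haS, haT, hbS, hbT]

lemma minCut_le [Fintype V] [DecidableEq V] (c : V → V → NNReal) (u v : V) (S : Finset V)
    (hu : u ∈ S) (hv : v ∉ S) : minCut c u v ≤ cutCost c S :=
  csInf_le (OrderBot.bddBelow _) ⟨S, hu, hv, rfl⟩

theorem gusfield_shelter_union [Fintype V] [DecidableEq V] (c : V → V → NNReal)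
    (hsymm : ∀ x y, c x y = c y x) (x y u v : V) (X H : Finset V)
    (hxX : x ∈ X) (hyX : y ∉ X) (hXmin : cutCost c X = minCut c x y)
    (huX : u ∉ X) (hvX : v ∉ X)
    (huH : u ∈ H) (hvH : v ∉ H) (hxH : x ∈ H) (hHmin : cutCost c H = minCut c u v) :
    cutCost c (H ∪ X) ≤ cutCost c H ∧ u ∈ H ∪ X ∧ v ∉ H ∪ X := by
  refine ⟨?_, Finset.mem_union_left _ huH, by simp [hvH, hvX]⟩
  have h1 : cutCost c X ≤ cutCost c (H ∩ X) := by
    rw [hXmin]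
    exact minCut_le c x y _ (Finset.mem_inter.2 ⟨hxH, hxX⟩)
      (fun h => hyX (Finset.mem_inter.1 h).2)
  have h2 := cutCost_submodular c H X
  have : cutCost c (H ∪ X) + cutCost c X ≤ cutCost c H + cutCost c X :=
    le_trans (add_le_add_right h1 _) h2
  exact le_of_add_le_add_right this
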